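/- Let X̃ᵀX̃ be symmetric positive definite with smallest eigenvalue q̲ and largest eigenvalue q̄, and suppose ρ > q̄ and b ≥ 2. Then the spectral radius of the matrix M_s (the ADMM mapping matrix when all b local covariance matrices equal (1/b)X̃ᵀX̃) equals bρ/(bρ + q̲). -/

import Mathlib

open Matrix

/-- The averaging projection `P = (1/b)·(J_b ⊗ I_p)` on index type `Fin p × Fin b`. -/
noncomputable def avgProj (p b : ℕ) : Matrix (Fin p × Fin b) (Fin p × Fin b) ℝ :=
  fun x y => if x.1 = y.1 then (b : ℝ)⁻¹ else 0

/-- The ADMM mapping matrix when all `b` local covariance matrices are equal to `D̄`: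
blockwise, `(M_s v)ᵢ = (I − Φ̄)vᵢ + (2Φ̄ − I)·v̄` where `Φ̄ = (I + D̄/ρ)⁻¹`. -/
noncomputable def admmMs (p b : ℕ) (ρ : ℝ) (Dbar : Matrix (Fin p) (Fin p) ℝ) :
    Matrix (Fin p × Fin b) (Fin p × Fin b) ℝ :=
  Matrix.blockDiagonal (fun _ : Fin b => 1 - (1 + ρ⁻¹ • Dbar)⁻¹) +
    Matrix.blockDiagonal (fun _ : Fin b => (2 : ℝ) • (1 + ρ⁻¹ • Dbar)⁻¹ - 1) * avgProj p b

lemma mem_spectrum_iff_exists_eigen {𝕜 : Type*} [Field 𝕜] {m : Type*} [Fintype m] [DecidableEq m]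
    (A : Matrix m m 𝕜) (μ : 𝕜) :
    μ ∈ spectrum 𝕜 A ↔ ∃ v, v ≠ 0 ∧ A.mulVec v = μ • v := by
  rw [spectrum.mem_iff, Matrix.isUnit_iff_isUnit_det, isUnit_iff_ne_zero, not_not,
    ← Matrix.exists_mulVec_eq_zero_iff]
  constructor
  · rintro ⟨v, hv, h⟩
    refine ⟨v, hv, ?_⟩
    rw [Algebra.algebraMap_eq_smul_one, sub_mulVec, smul_mulVec, one_mulVec,
      sub_eq_zero] at h
    exact h.symm
  · rintro ⟨v, hv, h⟩
    exact ⟨v, hv, by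
      rw [Algebra.algebraMap_eq_smul_one, sub_mulVec, smul_mulVec, one_mulVec, h,
        sub_self]⟩

lemma coe_mem_spectrum_complex {m : Type*} [Fintype m] [DecidableEq m]
    (A : Matrix m m ℝ) (q : ℝ) :
    (q : ℂ) ∈ spectrum ℂ (A.map (algebraMap ℝ ℂ)) ↔ q ∈ spectrum ℝ A := by
  rw [spectrum.mem_iff, spectrum.mem_iff, Matrix.isUnit_iff_isUnit_det,
    Matrix.isUnit_iff_isUnit_det, isUnit_iff_ne_zero, isUnit_iff_ne_zero, not_iff_not, ne_eq,
    ne_eq]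
  have h : algebraMap ℂ (Matrix m m ℂ) (q : ℂ) - A.map (algebraMap ℝ ℂ)
      = (algebraMap ℝ (Matrix m m ℝ) q - A).map (algebraMap ℝ ℂ) := by
    rw [Matrix.map_sub _ (fun a b => map_sub _ a b), Matrix.algebraMap_eq_diagonal,
      Matrix.algebraMap_eq_diagonal, Matrix.diagonal_map (map_zero _)]
    congr
  rw [h, ← RingHom.mapMatrix_apply, ← RingHom.map_det,
    map_eq_zero_iff _ (algebraMap ℝ ℂ).injective]

lemma star_dot_self_ne_zero {m : Type*} [Fintype m] {v : m → ℂ} (hv : v ≠ 0) :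
    star v ⬝ᵥ v ≠ 0 := by
  have h1 : star v ⬝ᵥ v = ((∑ i, Complex.normSq (v i) : ℝ) : ℂ) := by
    rw [dotProduct]
    push_cast
    exact Finset.sum_congr rfl fun i _ => by
      rw [Pi.star_apply, Complex.star_def, mul_comm, Complex.mul_conj]
  intro h0
  rw [h1, Complex.ofReal_eq_zero] at h0
  apply hv
  funext i
  have := (Finset.sum_eq_zero_iff_of_nonneg (fun i _ => Complex.normSq_nonneg (v i))).mp h0 i
    (Finset.mem_univ i)
  simpa using Complex.normSq_eq_zero.mp this

lemma herm_eig_real {m : Type*} [Fintype m] (A : Matrix m m ℂ) (hA : Aᴴ = A)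
    {μ : ℂ} {v : m → ℂ} (hv : v ≠ 0) (h : A.mulVec v = μ • v) : ∃ q : ℝ, μ = q := by
  have hd : star v ⬝ᵥ v ≠ 0 := star_dot_self_ne_zero hv
  have hds : star (star v ⬝ᵥ v) = star v ⬝ᵥ v := (Matrix.star_dotProduct v v).symm
  have hself : star (star v ⬝ᵥ A.mulVec v) = star v ⬝ᵥ A.mulVec v := by
    conv_lhs => rw [Matrix.star_dotProduct, star_star]
    rw [Matrix.star_mulVec, hA, ← Matrix.dotProduct_mulVec]
  have h1 : star v ⬝ᵥ A.mulVec v = μ * (star v ⬝ᵥ v) := by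
    rw [h, dotProduct_smul, smul_eq_mul]
  rw [h1, star_mul', hds] at hself
  have h2 : (starRingEnd ℂ) μ = μ := mul_right_cancel₀ hd hself
  exact Complex.conj_eq_iff_real.mp h2

lemma blockDiagonal_mulVec_apply {α : Type*} [CommRing α] {p b : ℕ}
    (C : Matrix (Fin p) (Fin p) α) (v : Fin p × Fin b → α) (i : Fin p) (k : Fin b) :
    (Matrix.blockDiagonal (fun _ : Fin b => C)).mulVec v (i, k)
      = C.mulVec (fun j => v (j, k)) i := by
  simp only [Matrix.mulVec, dotProduct, Fintype.sum_prod_type,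
    Matrix.blockDiagonal_apply, ite_mul, zero_mul]
  exact Finset.sum_congr rfl fun j _ => by simp

lemma avgProj_map_mulVec {p b : ℕ} (v : Fin p × Fin b → ℂ) (i : Fin p) (k : Fin b) :
    ((avgProj p b).map (algebraMap ℝ ℂ)).mulVec v (i, k) = (b : ℂ)⁻¹ * ∑ l, v (i, l) := by
  simp only [Matrix.mulVec, dotProduct, Fintype.sum_prod_type, Matrix.map_apply, avgProj,
    apply_ite (algebraMap ℝ ℂ), map_zero, map_inv₀, map_natCast, ite_mul, zero_mul,
    Finset.mul_sum]
  rw [Finset.sum_comm]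
  simp [Finset.sum_ite_eq]

lemma avgProj_comm {p b : ℕ} (C : Matrix (Fin p) (Fin p) ℝ) :
    avgProj p b * Matrix.blockDiagonal (fun _ : Fin b => C)
      = Matrix.blockDiagonal (fun _ : Fin b => C) * avgProj p b := by
  ext ⟨i, k⟩ ⟨j, l⟩
  simp [Matrix.mul_apply, Fintype.sum_prod_type, Matrix.blockDiagonal_apply, avgProj,
    ite_mul, mul_ite, mul_zero, zero_mul, Finset.sum_ite_eq, Finset.sum_ite_eq', mul_comm]

lemma avgProj_idem {p b : ℕ} (hb : (b : ℝ) ≠ 0) :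
    avgProj p b * avgProj p b = avgProj p b := by
  ext ⟨i, k⟩ ⟨j, l⟩
  by_cases h : i = j
  · subst h
    simp only [Matrix.mul_apply, Fintype.sum_prod_type, avgProj, ite_mul, mul_ite, mul_zero,
      zero_mul, if_true]
    rw [Finset.sum_eq_single i]
    · simp only [if_true, Finset.sum_const, Finset.card_univ, Fintype.card_fin, nsmul_eq_mul]
      field_simp
    · intro x _ hx
      simp [hx, Ne.symm hx]
    · simp
  · simp only [Matrix.mul_apply, Fintype.sum_prod_type, avgProj, ite_mul, mul_ite, mul_zero,
      zero_mul, h, if_false]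
    apply Finset.sum_eq_zero
    intro x _
    apply Finset.sum_eq_zero
    intro y _
    by_cases h1 : i = x <;> by_cases h2 : x = j <;> simp_all

lemma avgProj_mul_admm {p b : ℕ} (hb : (b : ℝ) ≠ 0) (ρ : ℝ)
    (Dbar : Matrix (Fin p) (Fin p) ℝ) :
    avgProj p b * admmMs p b ρ Dbar
      = Matrix.blockDiagonal (fun _ : Fin b => (1 + ρ⁻¹ • Dbar)⁻¹) * avgProj p b := by
  set Φ := (1 + ρ⁻¹ • Dbar)⁻¹ with hΦ
  unfold admmMs
  have hsum : Matrix.blockDiagonal (fun _ : Fin b => 1 - Φ)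
      + Matrix.blockDiagonal (fun _ : Fin b => (2 : ℝ) • Φ - 1)
      = Matrix.blockDiagonal (fun _ : Fin b => Φ) := by
    rw [← Matrix.blockDiagonal_add]
    exact congrArg Matrix.blockDiagonal (funext fun _ => by
      simp only [Pi.add_apply]; rw [two_smul]; abel)
  rw [mul_add, avgProj_comm, ← mul_assoc, avgProj_comm ((2 : ℝ) • Φ - 1), mul_assoc,
    avgProj_idem hb, ← add_mul, hsum]

theorem spectralRadius_of_Ms {n p b : ℕ} (hb : 2 ≤ b)
    (X : Matrix (Fin n) (Fin p) ℝ) (hX : (Xᵀ * X).PosDef)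
    (qlo qhi ρ : ℝ)
    (hqlo_mem : qlo ∈ spectrum ℝ (Xᵀ * X))
    (hqlo : ∀ x ∈ spectrum ℝ (Xᵀ * X), qlo ≤ x)
    (hqhi : ∀ x ∈ spectrum ℝ (Xᵀ * X), x ≤ qhi)
    (hρ : qhi < ρ) :
    spectralRadius ℂ ((admmMs p b ρ (((b : ℝ))⁻¹ • (Xᵀ * X))).map (algebraMap ℝ ℂ)) =
      ENNReal.ofReal (b * ρ / (b * ρ + qlo)) := by
  classical
  have hbpos : 0 < (b : ℝ) := by
    have : 0 < b := by omega
    exact_mod_cast this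
  have hb0 : (b : ℝ) ≠ 0 := hbpos.ne'
  set A := Xᵀ * X with hAdef
  -- positivity of qlo and ρ
  obtain ⟨w₀, hw₀, hAw₀⟩ := (mem_spectrum_iff_exists_eigen A qlo).mp hqlo_mem
  have hqlo_pos : 0 < qlo := by
    have h1 := hX.dotProduct_mulVec_pos hw₀
    rw [hAw₀] at h1
    simp only [dotProduct_smul, smul_eq_mul, star_trivial] at h1
    have hvv : 0 ≤ w₀ ⬝ᵥ w₀ := Finset.sum_nonneg fun i _ => mul_self_nonneg _
    nlinarith
  have hρpos : 0 < ρ := (hqlo_pos.trans_le (hqhi qlo hqlo_mem)).trans hρ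
  set K := (b : ℝ) * ρ with hKdef
  have hK0 : 0 < K := mul_pos hbpos hρpos
  have hb2 : (2 : ℝ) ≤ (b : ℝ) := by exact_mod_cast hb
  have hρK : ρ ≤ K := by nlinarith
  set Dbar := ((b : ℝ))⁻¹ • A with hDdef
  set N := (1 : Matrix (Fin p) (Fin p) ℝ) + ρ⁻¹ • Dbar with hNdef
  have hcoef : ρ⁻¹ * ((b : ℝ))⁻¹ = K⁻¹ := by
    rw [hKdef, mul_inv]; ring
  have hNA : N = 1 + K⁻¹ • A := by
    rw [hNdef, hDdef, smul_smul, hcoef]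
  have hNpd : N.PosDef := by
    have hS : (ρ⁻¹ • Dbar).PosSemidef := by
      refine Matrix.PosSemidef.of_dotProduct_mulVec_nonneg ?_ ?_
      · show (ρ⁻¹ • Dbar)ᴴ = ρ⁻¹ • Dbar
        rw [hDdef, Matrix.conjTranspose_smul, Matrix.conjTranspose_smul]
        simp only [star_trivial]
        rw [hX.1.eq]
      · intro x
        rw [hDdef, smul_mulVec, dotProduct_smul, smul_mulVec,
          dotProduct_smul, smul_eq_mul, smul_eq_mul]
        have h2 := hX.posSemidef.dotProduct_mulVec_nonneg x
        positivity
    exact Matrix.PosDef.add_posSemidef Matrix.PosDef.one hS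
  have hdet : IsUnit N.det := isUnit_iff_ne_zero.mpr (ne_of_gt hNpd.det_pos)
  set Φ := N⁻¹ with hΦdef
  have hNΦ : N * Φ = 1 := Matrix.mul_nonsing_inv N hdet
  have hΦN : Φ * N = 1 := Matrix.nonsing_inv_mul N hdet
  -- complexifications
  set f := algebraMap ℝ ℂ with hfdef
  set Ac := A.map f with hAc
  set Nc := N.map f with hNcdef
  set Φc := Φ.map f with hΦcdef
  set Pc := (avgProj p b).map f with hPcdef
  have hmapmul : ∀ (B C : Matrix (Fin p) (Fin p) ℝ), (B * C).map f = B.map f * C.map f :=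
    fun B C => Matrix.map_mul
  have hmapone : (1 : Matrix (Fin p) (Fin p) ℝ).map f = 1 :=
    Matrix.map_one f (map_zero f) (map_one f)
  have hNcΦc : Nc * Φc = 1 := by rw [hNcdef, hΦcdef, ← hmapmul, hNΦ, hmapone]
  have hΦcNc : Φc * Nc = 1 := by rw [hNcdef, hΦcdef, ← hmapmul, hΦN, hmapone]
  have hAcherm : Acᴴ = Ac := by
    rw [hAc, ← Matrix.conjTranspose_map f (fun x => by simp [hfdef, Complex.conj_ofReal]),
      hX.1.eq]
  have hNc : Nc = 1 + ((K⁻¹ : ℝ) : ℂ) • Ac := by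
    rw [hNcdef, hNA, Matrix.map_add f (map_add f), hmapone,
      Matrix.map_smul f K⁻¹ (fun a => by simp [hfdef, Complex.real_smul]) A, ← hAc]
    rw [show ((K⁻¹ : ℝ) : ℂ) • Ac = K⁻¹ • Ac by
      rw [← Complex.coe_algebraMap]; exact algebraMap_smul ℂ K⁻¹ Ac]
  -- the key algebraic lemma
  have key : ∀ (μ : ℂ) (u : Fin p → ℂ), u ≠ 0 → Φc.mulVec u = μ • u →
      ∃ q : ℝ, q ∈ spectrum ℝ A ∧ μ * ((K : ℂ) + (q : ℂ)) = (K : ℂ) := by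
    intro μ u hu hΦu
    have hKC : ((K : ℝ) : ℂ) ≠ 0 := Complex.ofReal_ne_zero.mpr hK0.ne'
    have h1 : u = μ • Nc.mulVec u := by
      calc u = (Nc * Φc).mulVec u := by rw [hNcΦc, Matrix.one_mulVec]
        _ = Nc.mulVec (Φc.mulVec u) := (Matrix.mulVec_mulVec u Nc Φc).symm
        _ = Nc.mulVec (μ • u) := by rw [hΦu]
        _ = μ • Nc.mulVec u := Nc.mulVec_smul μ u
    have hμ0 : μ ≠ 0 := by
      rintro rfl
      rw [zero_smul] at h1
      exact hu h1
    have h2 : u = μ • u + (μ * ((K : ℂ))⁻¹) • Ac.mulVec u := by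
      conv_lhs => rw [h1, hNc, Complex.ofReal_inv]
      rw [Matrix.add_mulVec, Matrix.one_mulVec, Matrix.smul_mulVec, smul_add, smul_smul]
    have hc0 : (μ * ((K : ℂ))⁻¹) ≠ 0 := mul_ne_zero hμ0 (inv_ne_zero hKC)
    have h4 : (μ * ((K : ℂ))⁻¹) • Ac.mulVec u = (1 - μ) • u := by
      rw [sub_smul, one_smul]
      calc (μ * ((K : ℂ))⁻¹) • Ac.mulVec u
          = (μ • u + (μ * ((K : ℂ))⁻¹) • Ac.mulVec u) - μ • u := by abel
        _ = u - μ • u := by rw [← h2]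
    have h3 : Ac.mulVec u = ((1 - μ) * (K : ℂ) / μ) • u := by
      have := congrArg (fun w => (μ * ((K : ℂ))⁻¹)⁻¹ • w) h4
      simp only [inv_smul_smul₀ hc0, smul_smul] at this
      rw [this]
      congr 1
      field_simp
    obtain ⟨q, hq⟩ := herm_eig_real Ac hAcherm hu h3
    have hqmem : q ∈ spectrum ℝ A := by
      rw [← coe_mem_spectrum_complex, ← hAc]
      exact (mem_spectrum_iff_exists_eigen Ac (q : ℂ)).mpr ⟨u, hu, by rw [h3, hq]⟩
    refine ⟨q, hqmem, ?_⟩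
    rw [div_eq_iff hμ0] at hq
    linear_combination -hq
  -- decomposition of the complexified matrix
  set B1c := Matrix.blockDiagonal (fun _ : Fin b => (1 : Matrix (Fin p) (Fin p) ℂ) - Φc)
    with hB1c
  set B2c := Matrix.blockDiagonal (fun _ : Fin b => Φc + Φc - (1 : Matrix (Fin p) (Fin p) ℂ))
    with hB2c
  set Mc := (admmMs p b ρ Dbar).map f with hMcdef
  have hMcdecomp : Mc = B1c + B2c * Pc := by
    rw [hMcdef]
    show (Matrix.blockDiagonal (fun _ : Fin b => 1 - Φ) +
      Matrix.blockDiagonal (fun _ : Fin b => (2 : ℝ) • Φ - 1) * avgProj p b).map f = _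
    rw [Matrix.map_add f (map_add f), Matrix.map_mul,
      Matrix.blockDiagonal_map _ f (map_zero f), Matrix.blockDiagonal_map _ f (map_zero f)]
    congr 1
    · rw [hB1c]
      congr 1
      funext _
      rw [Matrix.map_sub f (map_sub f), hmapone, hΦcdef]
    · congr 1
      rw [hB2c]
      congr 1
      funext _
      rw [two_smul, Matrix.map_sub f (map_sub f), Matrix.map_add f (map_add f), hmapone,
        hΦcdef]
  have hcommC : Pc * Mc = Matrix.blockDiagonal (fun _ : Fin b => Φc) * Pc := by
    calc Pc * Mc = ((avgProj p b) * admmMs p b ρ Dbar).map f := by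
          rw [Matrix.map_mul, hPcdef, hMcdef]
      _ = (Matrix.blockDiagonal (fun _ : Fin b => Φ) * avgProj p b).map f := by
          rw [avgProj_mul_admm hb0 ρ Dbar, ← hNdef, ← hΦdef]
      _ = Matrix.blockDiagonal (fun _ : Fin b => Φc) * Pc := by
          rw [Matrix.map_mul, Matrix.blockDiagonal_map _ f (map_zero f), hΦcdef, hPcdef]
  -- characterization of the spectrum
  have main : ∀ μ ∈ spectrum ℂ Mc, ∃ q : ℝ, q ∈ spectrum ℝ A ∧
      (μ * ((K : ℂ) + (q : ℂ)) = (K : ℂ) ∨ μ * ((K : ℂ) + (q : ℂ)) = (q : ℂ)) := by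
    intro μ hμ
    obtain ⟨v, hv, hMv⟩ := (mem_spectrum_iff_exists_eigen Mc μ).mp hμ
    by_cases hu0 : Pc.mulVec v = 0
    · -- kernel of the averaging projection
      have hBv : B1c.mulVec v = μ • v := by
        rw [← hMv, hMcdecomp, Matrix.add_mulVec, ← Matrix.mulVec_mulVec, hu0,
          Matrix.mulVec_zero, add_zero]
      obtain ⟨jk, hjk⟩ := Function.ne_iff.mp hv
      obtain ⟨j0, k0⟩ := jk
      have hvk : (fun j => v (j, k0)) ≠ 0 := fun h => hjk (congrFun h j0)
      have heig : Φc.mulVec (fun j => v (j, k0)) = (1 - μ) • (fun j => v (j, k0)) := by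
        funext j
        have h1 := congrFun hBv (j, k0)
        rw [hB1c, blockDiagonal_mulVec_apply, Matrix.sub_mulVec, Matrix.one_mulVec] at h1
        simp only [Pi.sub_apply, Pi.smul_apply, smul_eq_mul] at h1 ⊢
        linear_combination -h1
      obtain ⟨q, hqmem, hqeq⟩ := key (1 - μ) _ hvk heig
      exact ⟨q, hqmem, Or.inr (by linear_combination -hqeq)⟩
    · -- range of the averaging projection
      have hBu : (Matrix.blockDiagonal (fun _ : Fin b => Φc)).mulVec (Pc.mulVec v)
          = μ • Pc.mulVec v := by
        calc (Matrix.blockDiagonal (fun _ : Fin b => Φc)).mulVec (Pc.mulVec v)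
            = ((Matrix.blockDiagonal (fun _ : Fin b => Φc)) * Pc).mulVec v := by
              rw [Matrix.mulVec_mulVec]
          _ = (Pc * Mc).mulVec v := by rw [hcommC]
          _ = Pc.mulVec (Mc.mulVec v) := by rw [Matrix.mulVec_mulVec]
          _ = Pc.mulVec (μ • v) := by rw [hMv]
          _ = μ • Pc.mulVec v := Pc.mulVec_smul μ v
      obtain ⟨jk, hjk⟩ := Function.ne_iff.mp hu0
      obtain ⟨j0, k0⟩ := jk
      have huk : (fun j => Pc.mulVec v (j, k0)) ≠ 0 := fun h => hjk (congrFun h j0)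
      have heig : Φc.mulVec (fun j => Pc.mulVec v (j, k0))
          = μ • (fun j => Pc.mulVec v (j, k0)) := by
        funext j
        have h1 := congrFun hBu (j, k0)
        rw [blockDiagonal_mulVec_apply] at h1
        exact h1
      obtain ⟨q, hqmem, hqeq⟩ := key μ _ huk heig
      exact ⟨q, hqmem, Or.inl hqeq⟩
  -- the maximal element of the spectrum is attained
  set μ₀ : ℂ := ((K / (K + qlo) : ℝ) : ℂ) with hμ₀def
  have hKqlo : (0 : ℝ) < K + qlo := by linarith
  have hmem : μ₀ ∈ spectrum ℂ Mc := by
    -- complexified eigenvector of A for qlo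
    set wc : Fin p → ℂ := fun i => ((w₀ i : ℝ) : ℂ) with hwc
    have hwcne : wc ≠ 0 := by
      obtain ⟨i, hi⟩ := Function.ne_iff.mp hw₀
      exact Function.ne_iff.mpr ⟨i, by simpa [hwc, Complex.ofReal_eq_zero] using hi⟩
    have hfw : (⇑f ∘ w₀) = wc := funext fun i => by simp [hfdef, hwc]
    have hAcw : Ac.mulVec wc = ((qlo : ℝ) : ℂ) • wc := by
      funext i
      have h1 := RingHom.map_mulVec f A w₀ i
      rw [hAw₀, hfw] at h1
      rw [hAc, ← h1]
      simp [hwc, hfdef, Complex.real_smul, smul_eq_mul]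
    have hNcw : Nc.mulVec wc = (((K + qlo) / K : ℝ) : ℂ) • wc := by
      rw [hNc, Matrix.add_mulVec, Matrix.one_mulVec, Matrix.smul_mulVec, hAcw]
      funext i
      have hKC : ((K : ℝ) : ℂ) ≠ 0 := Complex.ofReal_ne_zero.mpr hK0.ne'
      simp only [Pi.add_apply, Pi.smul_apply, smul_eq_mul]
      rw [Complex.ofReal_div, Complex.ofReal_add, Complex.ofReal_inv]
      field_simp
    have hcne : (((K + qlo) / K : ℝ) : ℂ) ≠ 0 := by
      rw [Complex.ofReal_ne_zero]
      positivity
    have hΦcw : Φc.mulVec wc = μ₀ • wc := by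
      have h1 : Φc.mulVec (Nc.mulVec wc) = wc := by
        rw [Matrix.mulVec_mulVec, hΦcNc, Matrix.one_mulVec]
      rw [hNcw, Matrix.mulVec_smul] at h1
      have h2 := congrArg (fun w => (((K + qlo) / K : ℝ) : ℂ)⁻¹ • w) h1
      simp only [inv_smul_smul₀ hcne] at h2
      rw [h2, hμ₀def]
      congr 1
      rw [← Complex.ofReal_inv]
      congr 1
      rw [inv_div]
    set V : Fin p × Fin b → ℂ := fun x => wc x.1 with hVdef
    have hVne : V ≠ 0 := by
      obtain ⟨i, hi⟩ := Function.ne_iff.mp hwcne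
      exact Function.ne_iff.mpr ⟨(i, ⟨0, by omega⟩), hi⟩
    have hPV : Pc.mulVec V = V := by
      funext x
      obtain ⟨i, k⟩ := x
      rw [hPcdef, avgProj_map_mulVec]
      simp only [hVdef, Finset.sum_const, Finset.card_univ, Fintype.card_fin, nsmul_eq_mul]
      have : ((b : ℂ)) ≠ 0 := by exact_mod_cast hb0
      field_simp
    have hMV : Mc.mulVec V = μ₀ • V := by
      rw [hMcdecomp, Matrix.add_mulVec, ← Matrix.mulVec_mulVec, hPV]
      funext x
      obtain ⟨i, k⟩ := x
      rw [Pi.add_apply, hB1c, hB2c, blockDiagonal_mulVec_apply, blockDiagonal_mulVec_apply]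
      have hfk : (fun j => V (j, k)) = wc := rfl
      rw [hfk, Matrix.sub_mulVec, Matrix.sub_mulVec, Matrix.add_mulVec, Matrix.one_mulVec,
        hΦcw]
      simp only [Pi.sub_apply, Pi.add_apply, Pi.smul_apply, smul_eq_mul, hVdef]
      ring
    exact (mem_spectrum_iff_exists_eigen Mc μ₀).mpr ⟨V, hVne, hMV⟩
  -- compute the spectral radius
  have hr0_nonneg : (0 : ℝ) ≤ K / (K + qlo) := by positivity
  unfold spectralRadius
  apply le_antisymm
  · refine iSup₂_le fun μ hμ => ?_
    obtain ⟨q, hqmem, hcase⟩ := main μ hμ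
    have hq_lo := hqlo q hqmem
    have hq_hi := hqhi q hqmem
    have hq_pos : 0 < q := hqlo_pos.trans_le hq_lo
    have hKq : (0 : ℝ) < K + q := by linarith
    have hKqC : ((K + q : ℝ) : ℂ) ≠ 0 := Complex.ofReal_ne_zero.mpr hKq.ne'
    have hμval : μ = ((K / (K + q) : ℝ) : ℂ) ∨ μ = ((q / (K + q) : ℝ) : ℂ) := by
      rcases hcase with h | h
      · left
        rw [Complex.ofReal_div]
        rw [eq_div_iff (by push_cast at hKqC ⊢; exact hKqC)]
        push_cast
        linear_combination h
      · right
        rw [Complex.ofReal_div]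
        rw [eq_div_iff (by push_cast at hKqC ⊢; exact hKqC)]
        push_cast
        linear_combination h
    have hub : ∀ x : ℝ, 0 ≤ x → x ≤ K / (K + qlo) →
        (‖((x : ℝ) : ℂ)‖₊ : ENNReal) ≤ ENNReal.ofReal (K / (K + qlo)) := by
      intro x hx0 hx
      rw [Complex.nnnorm_real, ← enorm_eq_nnnorm, Real.enorm_eq_ofReal hx0]
      exact ENNReal.ofReal_le_ofReal hx
    rcases hμval with rfl | rfl
    · refine hub _ (by positivity) ?_
      rw [div_le_div_iff₀ hKq hKqlo]
      nlinarith
    · refine hub _ (by positivity) ?_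
      rw [div_le_div_iff₀ hKq hKqlo]
      nlinarith
  · have heq : ENNReal.ofReal (K / (K + qlo)) = (‖μ₀‖₊ : ENNReal) := by
      rw [hμ₀def, Complex.nnnorm_real, ← enorm_eq_nnnorm, Real.enorm_eq_ofReal hr0_nonneg]
    rw [heq]
    exact le_iSup₂ (f := fun (k : ℂ) (_ : k ∈ spectrum ℂ Mc) => (‖k‖₊ : ENNReal)) μ₀ hmem
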